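/- Let Σ = {0, 1}, let n ≥ 1, and let 0 ≤ i ≤ n − 1. Then the following language identity holds: Σ^i · {1} · Σ^{n−i−1} ∪ Σ^{≥ n+1} = Σ^i · Σ* · {1} · Σ^{n−i−1} · Σ* ∪ Σ^{n+1} · Σ*, where Σ^j denotes the set of words of length exactly j over Σ and Σ^{≥ n+1} the set of words of length at least n + 1. In particular, the language on the left-hand side is a finite union of shuffle ideals. -/

import Mathlib

/-- A language `L` over the alphabet `α` is a *shuffle ideal* if whenever `w ∈ L`
and `w` is a subsequence of `u`, then `u ∈ L`. -/
def ShuffleIdeal {α : Type*} (L : Set (List α)) : Prop :=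
  ∀ w u : List α, w ∈ L → w.Sublist u → u ∈ L

def idealMem (i k : ℕ) (w : List Bool) : Prop :=
  ∃ a b : List Bool, i ≤ a.length ∧ k ≤ b.length ∧ w = a ++ true :: b

lemma idealMem_sublist {w u : List Bool} (h : w.Sublist u) :
    ∀ i k, idealMem i k w → idealMem i k u := by
  induction h with
  | slnil => exact fun i k h => h
  | cons x _ ih =>
      rintro i k hm
      obtain ⟨a, b, ha, hb, rfl⟩ := ih i k hm
      exact ⟨x :: a, b, le_trans ha (by simp), hb, rfl⟩
  | cons_cons x h ih =>
      rintro i k ⟨a, b, ha, hb, he⟩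
      cases a with
      | nil =>
          simp at he
          obtain ⟨rfl, rfl⟩ := he
          exact ⟨[], _, ha, le_trans hb h.length_le, rfl⟩
      | cons c a' =>
          simp only [List.cons_append, List.cons.injEq] at he
          obtain ⟨hxc, he⟩ := he
          obtain ⟨a₂, b₂, ha₂, hb₂, rfl⟩ := ih (a'.length) k ⟨a', b, le_rfl, hb, he⟩
          refine ⟨x :: a₂, b₂, ?_, hb₂, rfl⟩
          simp at ha ⊢
          omega

lemma mem_A_iff (i k : ℕ) (w : List Bool) :
    (∃ x u y v : List Bool,
        x.length = i ∧ y.length = k ∧ w = x ++ u ++ true :: (y ++ v)) ↔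
      idealMem i k w := by
  constructor
  · rintro ⟨x, u, y, v, hx, hy, rfl⟩
    exact ⟨x ++ u, y ++ v, by simp [hx], by simp [hy], by simp⟩
  · rintro ⟨a, b, ha, hb, rfl⟩
    refine ⟨a.take i, a.drop i, b.take k, b.drop k, ?_, ?_, ?_⟩
    · simp [ha]
    · simp [hb]
    · simp

theorem stmt_14 (n i : ℕ) (hn : 1 ≤ n) (hi : i ≤ n - 1) :
    ({ w : List Bool | ∃ x y : List Bool,
          x.length = i ∧ y.length = n - i - 1 ∧ w = x ++ true :: y } ∪
        { w : List Bool | n + 1 ≤ w.length } =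
      { w : List Bool | ∃ x u y v : List Bool,
          x.length = i ∧ y.length = n - i - 1 ∧ w = x ++ u ++ true :: (y ++ v) } ∪
        { w : List Bool | ∃ x v : List Bool, x.length = n + 1 ∧ w = x ++ v }) ∧
    ∃ S : Set (Set (List Bool)), S.Finite ∧ (∀ K ∈ S, ShuffleIdeal K) ∧
      ({ w : List Bool | ∃ x y : List Bool,
          x.length = i ∧ y.length = n - i - 1 ∧ w = x ++ true :: y } ∪
        { w : List Bool | n + 1 ≤ w.length }) = ⋃₀ S := by
  have hB : { w : List Bool | ∃ x v : List Bool, x.length = n + 1 ∧ w = x ++ v } =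
      { w : List Bool | n + 1 ≤ w.length } := by
    ext w
    constructor
    · rintro ⟨x, v, hx, rfl⟩
      simp [hx]
      omega
    · intro hw
      exact ⟨w.take (n + 1), w.drop (n + 1), by simpa using hw, by simp⟩
  have heq : ({ w : List Bool | ∃ x y : List Bool,
          x.length = i ∧ y.length = n - i - 1 ∧ w = x ++ true :: y } ∪
        { w : List Bool | n + 1 ≤ w.length } =
      { w : List Bool | ∃ x u y v : List Bool,
          x.length = i ∧ y.length = n - i - 1 ∧ w = x ++ u ++ true :: (y ++ v) } ∪
        { w : List Bool | ∃ x v : List Bool, x.length = n + 1 ∧ w = x ++ v }) := by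
    rw [hB]
    ext w
    constructor
    · rintro (⟨x, y, hx, hy, rfl⟩ | hw)
      · exact Or.inl ⟨x, [], y, [], hx, hy, by simp⟩
      · exact Or.inr hw
    · rintro (⟨x, u, y, v, hx, hy, rfl⟩ | hw)
      · rcases u with _ | ⟨c, u⟩
        · rcases v with _ | ⟨c, v⟩
          · exact Or.inl ⟨x, y, hx, hy, by simp⟩
          · right
            simp [hx, hy]
            omega
        · right
          simp [hx, hy]
          omega
      · exact Or.inr hw
  refine ⟨heq, ?_⟩
  refine ⟨{{ w : List Bool | ∃ x u y v : List Bool,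
          x.length = i ∧ y.length = n - i - 1 ∧ w = x ++ u ++ true :: (y ++ v) },
        { w : List Bool | n + 1 ≤ w.length }}, (Set.finite_singleton _).insert _, ?_, ?_⟩
  · rintro K (rfl | rfl)
    · intro w u hw hsub
      rw [Set.mem_setOf_eq, mem_A_iff] at hw ⊢
      exact idealMem_sublist hsub _ _ hw
    · intro w u hw hsub
      exact le_trans hw hsub.length_le
  · rw [heq, hB, Set.sUnion_pair]
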